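/- Let S and Q be symmetric positive definite n×n real matrices. Then for every n×n real matrix A, the matrix Aᵀ(Q + A S Aᵀ)⁻¹ A − S⁻¹ is negative semidefinite. -/

import Mathlib

open Matrix

theorem stmt_0 {n : ℕ} (S Q A : Matrix (Fin n) (Fin n) ℝ)
    (hS : S.PosDef) (hQ : Q.PosDef) :
    ∀ x : Fin n → ℝ,
      x ⬝ᵥ ((Aᵀ * (Q + A * S * Aᵀ)⁻¹ * A - S⁻¹).mulVec x) ≤ 0 := by
  intro x
  set M := Q + A * S * Aᵀ with hMdef
  have hM : M.PosDef := hQ.add_posSemidef (by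
    have := hS.posSemidef.mul_mul_conjTranspose_same A
    simpa [Matrix.mul_assoc] using this)
  have hSinv : (S⁻¹).PosDef := hS.inv
  haveI : Invertible S⁻¹ :=
    Matrix.invertibleOfIsUnitDet _ (isUnit_iff_ne_zero.mpr hSinv.det_pos.ne')
  haveI : Invertible M :=
    Matrix.invertibleOfIsUnitDet _ (isUnit_iff_ne_zero.mpr hM.det_pos.ne')
  have hAT : (Aᵀ)ᴴ = A := by ext i j; simp
  have hblock : (fromBlocks S⁻¹ Aᵀ A M).PosSemidef := by
    have h1 := (Matrix.PosDef.fromBlocks₁₁ (B := Aᵀ) (D := M) hSinv).mpr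
    rw [hAT] at h1
    apply h1
    have hss : S⁻¹⁻¹ = S :=
      Matrix.nonsing_inv_nonsing_inv S (isUnit_iff_ne_zero.mpr hS.det_pos.ne')
    have : M - A * S⁻¹⁻¹ * Aᵀ = Q := by
      rw [hss, hMdef, add_sub_cancel_right]
    rw [this]
    exact hQ.posSemidef
  have hschur : (S⁻¹ - Aᵀ * M⁻¹ * A).PosSemidef := by
    have h2 := (Matrix.PosDef.fromBlocks₂₂ (A := S⁻¹) (B := Aᵀ) hM).mp
    rw [hAT] at h2
    exact h2 hblock
  have key := hschur.dotProduct_mulVec_nonneg x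
  rw [show Aᵀ * M⁻¹ * A - S⁻¹ = -(S⁻¹ - Aᵀ * M⁻¹ * A) from (neg_sub _ _).symm]
  simp only [Matrix.neg_mulVec, dotProduct_neg]
  simpa using key
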